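/- Let N ≥ 1, let A, B be N×N complex matrices, and let g ∈ {0,1,2} be such that at least g of the two matrices A, B have rank at most 1. Then Σ_{1≤i,j≤N} |A_{i,j}·B_{i,j}| ≤ N^{1−g/2} · ‖A‖·‖B‖, where ‖·‖ denotes the matrix operator norm (largest singular value). -/

import Mathlib

open MeasureTheory ProbabilityTheory Matrix Asymptotics
open scoped ENNReal NNReal Kronecker ProbabilityTheory

noncomputable section

/-- Square complex matrices of size `N`. -/
abbrev Mat (N : ℕ) := Matrix (Fin N) (Fin N) ℂ

/-- The normalized trace `(1/N) Tr`. -/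
def ntr {N : ℕ} (M : Mat N) : ℂ := (N : ℂ)⁻¹ * Matrix.trace M

/-- The operator norm of a matrix, acting on the Euclidean space `ℂ^N`. -/
def opNorm {N : ℕ} (M : Mat N) : ℝ := ‖Matrix.toEuclideanCLM (𝕜 := ℂ) M‖

/-- Frobenius norm. -/
def frob {N : ℕ} (M : Mat N) : ℝ := Real.sqrt (∑ i : Fin N, ∑ j : Fin N, ‖M i j‖ ^ 2)

lemma frob_nonneg {N : ℕ} (M : Mat N) : 0 ≤ frob M := Real.sqrt_nonneg _

lemma opNorm_nonneg {N : ℕ} (M : Mat N) : 0 ≤ opNorm M := norm_nonneg _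

lemma cs_bound {N : ℕ} (A B : Mat N) :
    ∑ i : Fin N, ∑ j : Fin N, ‖A i j * B i j‖ ≤ frob A * frob B := by
  have h := Finset.sum_mul_sq_le_sq_mul_sq Finset.univ
    (fun p : Fin N × Fin N => ‖A p.1 p.2‖) (fun p : Fin N × Fin N => ‖B p.1 p.2‖)
  have hnn : (0:ℝ) ≤ ∑ p : Fin N × Fin N, ‖A p.1 p.2‖ * ‖B p.1 p.2‖ :=
    Finset.sum_nonneg fun p _ => mul_nonneg (norm_nonneg _) (norm_nonneg _)
  calc ∑ i : Fin N, ∑ j : Fin N, ‖A i j * B i j‖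
      = ∑ p : Fin N × Fin N, ‖A p.1 p.2‖ * ‖B p.1 p.2‖ := by
        rw [Fintype.sum_prod_type]; simp [norm_mul]
    _ = Real.sqrt ((∑ p : Fin N × Fin N, ‖A p.1 p.2‖ * ‖B p.1 p.2‖) ^ 2) :=
        (Real.sqrt_sq hnn).symm
    _ ≤ Real.sqrt ((∑ p : Fin N × Fin N, ‖A p.1 p.2‖ ^ 2) *
          (∑ p : Fin N × Fin N, ‖B p.1 p.2‖ ^ 2)) := Real.sqrt_le_sqrt h
    _ = frob A * frob B := by
        rw [Real.sqrt_mul (Finset.sum_nonneg fun p _ => sq_nonneg _)]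
        unfold frob
        rw [Fintype.sum_prod_type, Fintype.sum_prod_type]

lemma norm_apply_eq {N : ℕ} (M : Mat N) (y : Fin N → ℂ) :
    ‖Matrix.toEuclideanCLM (𝕜 := ℂ) M ((WithLp.equiv 2 _).symm y)‖
      = Real.sqrt (∑ i : Fin N, ‖(M *ᵥ y) i‖ ^ 2) := by
  show ‖Matrix.toEuclideanCLM (𝕜 := ℂ) M (WithLp.toLp 2 y)‖ = _
  rw [Matrix.toEuclideanCLM_toLp, EuclideanSpace.norm_eq]

lemma norm_symm_eq {N : ℕ} (y : Fin N → ℂ) :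
    ‖((WithLp.equiv 2 (Fin N → ℂ)).symm y : EuclideanSpace ℂ (Fin N))‖
      = Real.sqrt (∑ i : Fin N, ‖y i‖ ^ 2) := by
  rw [EuclideanSpace.norm_eq]; simp

lemma key_bound {N : ℕ} (M : Mat N) (y : Fin N → ℂ) :
    Real.sqrt (∑ i : Fin N, ‖(M *ᵥ y) i‖ ^ 2)
      ≤ opNorm M * Real.sqrt (∑ i : Fin N, ‖y i‖ ^ 2) := by
  rw [← norm_apply_eq, ← norm_symm_eq]
  exact (Matrix.toEuclideanCLM (𝕜 := ℂ) M).le_opNorm _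

lemma frob_le_sqrt_opNorm {N : ℕ} (M : Mat N) :
    frob M ≤ Real.sqrt N * opNorm M := by
  have hcol : ∀ j : Fin N, Real.sqrt (∑ i : Fin N, ‖M i j‖ ^ 2) ≤ opNorm M := by
    intro j
    have h := key_bound M (Pi.single j 1)
    have h1 : (∑ i : Fin N, ‖(Pi.single j 1 : Fin N → ℂ) i‖ ^ 2) = 1 := by
      rw [Finset.sum_eq_single j]
      · simp
      · intro b _ hb; simp [Pi.single_apply, hb]
      · simp
    have h2 : ∀ i, (M *ᵥ Pi.single j 1) i = M i j := by
      intro i; rw [Matrix.mulVec_single]; simp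
    rw [h1, Real.sqrt_one, mul_one] at h
    simp_rw [h2] at h
    exact h
  have hsq : ∑ i : Fin N, ∑ j : Fin N, ‖M i j‖ ^ 2 ≤ N * opNorm M ^ 2 := by
    rw [Finset.sum_comm]
    calc ∑ j : Fin N, ∑ i : Fin N, ‖M i j‖ ^ 2
        ≤ ∑ j : Fin N, opNorm M ^ 2 := by
          refine Finset.sum_le_sum fun j _ => ?_
          have := hcol j
          have hnn : (0:ℝ) ≤ ∑ i : Fin N, ‖M i j‖ ^ 2 :=
            Finset.sum_nonneg fun i _ => sq_nonneg _
          calc ∑ i : Fin N, ‖M i j‖ ^ 2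
              = Real.sqrt (∑ i : Fin N, ‖M i j‖ ^ 2) ^ 2 := (Real.sq_sqrt hnn).symm
            _ ≤ opNorm M ^ 2 := by
                exact pow_le_pow_left₀ (Real.sqrt_nonneg _) this 2
      _ = N * opNorm M ^ 2 := by simp [Finset.sum_const, mul_comm]
  unfold frob
  calc Real.sqrt (∑ i : Fin N, ∑ j : Fin N, ‖M i j‖ ^ 2)
      ≤ Real.sqrt (N * opNorm M ^ 2) := Real.sqrt_le_sqrt hsq
    _ = Real.sqrt N * opNorm M := by
        rw [Real.sqrt_mul (Nat.cast_nonneg N), Real.sqrt_sq (opNorm_nonneg M)]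

lemma rank_le_one_exists {N : ℕ} (M : Mat N) (h : M.rank ≤ 1) :
    ∃ u v : Fin N → ℂ, ∀ i j, M i j = u i * v j := by
  set W := LinearMap.range M.mulVecLin with hW
  have hfr : Module.finrank ℂ W ≤ 1 := h
  rw [finrank_le_one_iff] at hfr
  obtain ⟨v₀, hv₀⟩ := hfr
  refine ⟨fun i => (v₀ : Fin N → ℂ) i, fun j => Classical.choose (hv₀
    ⟨M *ᵥ Pi.single j 1, LinearMap.mem_range.2 ⟨Pi.single j 1, rfl⟩⟩), fun i j => ?_⟩
  have hc := Classical.choose_spec (hv₀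
    ⟨M *ᵥ Pi.single j 1, LinearMap.mem_range.2 ⟨Pi.single j 1, rfl⟩⟩)
  have := congrArg (fun w : W => (w : Fin N → ℂ) i) hc
  simp only [Submodule.coe_smul, Pi.smul_apply, smul_eq_mul] at this
  have hval : (M *ᵥ Pi.single j 1) i = M i j := by
    rw [Matrix.mulVec_single]; simp
  have h2 := this.trans hval
  simpa [mul_comm] using h2.symm

lemma frob_le_opNorm_of_rank {N : ℕ} (M : Mat N) (h : M.rank ≤ 1) :
    frob M ≤ opNorm M := by
  obtain ⟨u, v, huv⟩ := rank_le_one_exists M h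
  set S : ℝ := ∑ j : Fin N, ‖v j‖ ^ 2 with hS
  have hSnn : 0 ≤ S := Finset.sum_nonneg fun j _ => sq_nonneg _
  have hfrob : frob M = Real.sqrt (∑ i : Fin N, ‖u i‖ ^ 2) * Real.sqrt S := by
    unfold frob
    rw [← Real.sqrt_mul (Finset.sum_nonneg fun i _ => sq_nonneg _)]
    congr 1
    rw [Finset.sum_mul_sum]
    refine Finset.sum_congr rfl fun i _ => Finset.sum_congr rfl fun j _ => ?_
    rw [huv i j, norm_mul, mul_pow]
  rcases eq_or_lt_of_le hSnn with hS0 | hSpos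
  · -- S = 0, so v = 0, so M = 0, frob M = 0
    have hv : ∀ j, v j = 0 := by
      intro j
      have := (Finset.sum_eq_zero_iff_of_nonneg (fun j _ => sq_nonneg ‖v j‖)).1 hS0.symm j
        (Finset.mem_univ j)
      simpa using this
    have : frob M = 0 := by
      rw [hfrob]
      have : S = 0 := hS0.symm
      simp [this]
    rw [this]; exact opNorm_nonneg M
  · -- apply M to star v
    have h := key_bound M (star v)
    have h1 : (∑ i : Fin N, ‖(star v) i‖ ^ 2) = S := by
      simp [hS]
    have h2 : ∀ i, (M *ᵥ star v) i = u i * (S : ℂ) := by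
      intro i
      simp only [Matrix.mulVec, dotProduct, Pi.star_apply]
      rw [hS]
      push_cast
      rw [Finset.mul_sum]
      refine Finset.sum_congr rfl fun j _ => ?_
      rw [huv i j]
      have hvj : v j * star (v j) = ((‖v j‖ : ℂ)) ^ 2 := by
        rw [RCLike.star_def, RCLike.mul_conj]; norm_cast
      rw [mul_assoc, hvj]
    have h3 : Real.sqrt (∑ i : Fin N, ‖(M *ᵥ star v) i‖ ^ 2)
        = Real.sqrt (∑ i : Fin N, ‖u i‖ ^ 2) * S := by
      have : ∀ i, ‖(M *ᵥ star v) i‖ ^ 2 = ‖u i‖ ^ 2 * S ^ 2 := by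
        intro i
        rw [h2 i, norm_mul, mul_pow]
        congr 1
        rw [Complex.norm_real, Real.norm_of_nonneg hSnn]
      simp_rw [this]
      rw [← Finset.sum_mul, Real.sqrt_mul (Finset.sum_nonneg fun i _ => sq_nonneg _),
        Real.sqrt_sq hSnn]
    rw [h3, h1] at h
    have hsqrtS : 0 < Real.sqrt S := Real.sqrt_pos.2 hSpos
    rw [hfrob]
    have key : Real.sqrt (∑ i : Fin N, ‖u i‖ ^ 2) * Real.sqrt S * Real.sqrt S
        ≤ opNorm M * Real.sqrt S := by
      rw [mul_assoc, Real.mul_self_sqrt hSnn]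
      exact h
    exact le_of_mul_le_mul_right key hsqrtS

/-- If at least `g` of the matrices `A, B` have rank at most one, then
`∑_{i,j} |A_{ij} B_{ij}| ≤ N^{1-g/2} ‖A‖ ‖B‖`. -/
theorem entry_sum_two_bound
    (N : ℕ) (hN : 1 ≤ N) (A B : Mat N) (g : ℕ) (hg : g ≤ 2)
    (hr : g ≤ (Finset.univ.filter fun i : Fin 2 => (![A, B] i).rank ≤ 1).card) :
    ∑ i : Fin N, ∑ j : Fin N, ‖A i j * B i j‖ ≤
      (N : ℝ) ^ ((1 : ℝ) - (g : ℝ) / 2) * (opNorm A * opNorm B) := by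
  have hcs := cs_bound A B
  have hNnn : (0:ℝ) ≤ N := Nat.cast_nonneg N
  interval_cases g
  · -- g = 0
    rw [show ((1:ℝ) - ((0:ℕ):ℝ)/2) = 1 by norm_num, Real.rpow_one]
    calc ∑ i : Fin N, ∑ j : Fin N, ‖A i j * B i j‖
        ≤ frob A * frob B := hcs
      _ ≤ (Real.sqrt N * opNorm A) * (Real.sqrt N * opNorm B) :=
          mul_le_mul (frob_le_sqrt_opNorm A) (frob_le_sqrt_opNorm B)
            (frob_nonneg B) (mul_nonneg (Real.sqrt_nonneg _) (opNorm_nonneg _))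
      _ = (N:ℝ) * (opNorm A * opNorm B) := by
          rw [show (Real.sqrt N * opNorm A) * (Real.sqrt N * opNorm B)
            = (Real.sqrt N * Real.sqrt N) * (opNorm A * opNorm B) by ring,
            Real.mul_self_sqrt hNnn]
  · -- g = 1
    obtain ⟨i, hi⟩ := Finset.card_pos.mp hr
    rw [Finset.mem_filter] at hi
    have hex : A.rank ≤ 1 ∨ B.rank ≤ 1 := by
      fin_cases i
      · exact Or.inl (by simpa using hi.2)
      · exact Or.inr (by simpa using hi.2)
    rw [show ((1:ℝ) - ((1:ℕ):ℝ)/2) = 1/2 by norm_num, ← Real.sqrt_eq_rpow]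
    rcases hex with hA | hB
    · calc ∑ i : Fin N, ∑ j : Fin N, ‖A i j * B i j‖
          ≤ frob A * frob B := hcs
        _ ≤ opNorm A * (Real.sqrt N * opNorm B) :=
            mul_le_mul (frob_le_opNorm_of_rank A hA) (frob_le_sqrt_opNorm B)
              (frob_nonneg B) (opNorm_nonneg _)
        _ = Real.sqrt N * (opNorm A * opNorm B) := by ring
    · calc ∑ i : Fin N, ∑ j : Fin N, ‖A i j * B i j‖
          ≤ frob A * frob B := hcs
        _ ≤ (Real.sqrt N * opNorm A) * opNorm B :=
            mul_le_mul (frob_le_sqrt_opNorm A) (frob_le_opNorm_of_rank B hB)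
              (frob_nonneg B) (mul_nonneg (Real.sqrt_nonneg _) (opNorm_nonneg _))
        _ = Real.sqrt N * (opNorm A * opNorm B) := by ring
  · -- g = 2
    have hall : (Finset.univ.filter fun i : Fin 2 => (![A, B] i).rank ≤ 1)
        = Finset.univ := by
      apply Finset.eq_univ_of_card
      refine le_antisymm ?_ ?_
      · exact Finset.card_filter_le Finset.univ _
      · simpa using hr
    have hA : A.rank ≤ 1 := by
      have := Finset.mem_filter.mp (hall ▸ Finset.mem_univ (0 : Fin 2))
      simpa using this.2
    have hB : B.rank ≤ 1 := by
      have := Finset.mem_filter.mp (hall ▸ Finset.mem_univ (1 : Fin 2))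
      simpa using this.2
    rw [show ((1:ℝ) - ((2:ℕ):ℝ)/2) = 0 by norm_num, Real.rpow_zero, one_mul]
    calc ∑ i : Fin N, ∑ j : Fin N, ‖A i j * B i j‖
        ≤ frob A * frob B := hcs
      _ ≤ opNorm A * opNorm B :=
          mul_le_mul (frob_le_opNorm_of_rank A hA) (frob_le_opNorm_of_rank B hB)
            (frob_nonneg B) (opNorm_nonneg _)

end
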